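/- Let α > 1 be an ordinal, (T,μ,η) a monad and F an endofunctor on C, and ξ a distributive law of the pointwise-extended monad T^ over F^ ∘ ▶ on Sh_C(α), where ▶ is the later endofunctor. Then the family λ_X := ξ_{ΔX, β+2} (the component of ξ at the constant sheaf on X, evaluated at any double-successor stage β+2 < α) is independent of the choice of β and is a distributive law of (T,μ,η) over F on C. -/

import Mathlib

open CategoryTheory Opposite

universe w v u

/-- A law distributing a monad `(T,μ,η)` over an endofunctor `F`. -/
structure DistLaw {C : Type u} [Category.{v} C] (T : Monad C) (F : C ⥤ C) where
  nat : T.toFunctor ⋙ F ⟶ F ⋙ T.toFunctor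
  mu_compat : ∀ X : C, F.map (T.μ.app X) ≫ nat.app X =
      nat.app (T.obj X) ≫ T.map (nat.app X) ≫ T.μ.app (F.obj X)
  eta_compat : ∀ X : C, F.map (T.η.app X) ≫ nat.app X = T.η.app (F.obj X)

/-- The stages of the Alexandrov topology of the ordinal `α`: its open sets are the
ordinals `≤ α`.  `C`-valued sheaves on this topology are presheaves on this poset
satisfying the sheaf (limit) condition at limit stages. -/
def Stage (α : Ordinal.{w}) : Type (w + 1) :=
  {β : Ordinal.{w} // β ≤ α}

instance (α : Ordinal.{w}) : Preorder (Stage α) :=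
  Subtype.preorder _

namespace IndAux

variable {C : Type u} [Category.{v} C] {α : Ordinal.{w}}

theorem eq_conj {A B A' B' : C} (f : A ⟶ B) (g : A' ⟶ B') (eA : A = A') (eB : B = B')
    (h : HEq f g) : f = eqToHom eA ≫ g ≫ eqToHom eB.symm := by
  subst eA; subst eB; simpa using h

theorem heq_of_conj {A B A' B' : C} (f : A ⟶ B) (g : A' ⟶ B') (eA : A = A') (eB : B = B')
    (h : f = eqToHom eA ≫ g ≫ eqToHom eB.symm) : HEq f g := by
  subst eA; subst eB; simpa using h

theorem eq_eqToHom_of_heq {A B A' B' : C} (f : A ⟶ B) (eA : A = A') (eB : B = B')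
    (e : A' = B') (h : HEq f (eqToHom e)) : f = eqToHom ((eA.trans e).trans eB.symm) := by
  subst eA; subst eB; subst e; simpa using h

theorem eq_eqToHom_of_heq_id {A B A' : C} (f : A ⟶ B) (eA : A = A') (eB : B = A')
    (h : HEq f (𝟙 A')) : f = eqToHom (eA.trans eB.symm) := by
  subst eA; subst eB; simpa using h

theorem natTrans_app_congr {D : Type*} [Category D] {F G : C ⥤ D} (κ : F ⟶ G) {A B : C}
    (e : A = B) :
    κ.app A = eqToHom (by rw [e]) ≫ κ.app B ≫ eqToHom (by rw [e]) := by
  subst e; simp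

noncomputable def shiftFun (α : Ordinal.{w}) : Stage α → Stage α :=
  fun b => ⟨min (b.1 + 1) α, min_le_right _ _⟩

theorem shiftFun_mono : Monotone (shiftFun α) := by
  intro a b h
  exact min_le_min (add_le_add (show a.1 ≤ b.1 from h) le_rfl) le_rfl

noncomputable def shiftF (α : Ordinal.{w}) : Stage α ⥤ Stage α :=
  (shiftFun_mono (α := α)).functor

noncomputable def shiftP (P : (Stage α)ᵒᵖ ⥤ C) : (Stage α)ᵒᵖ ⥤ C := (shiftF α).op ⋙ P

theorem le_shiftFun (b : Stage α) : b ≤ shiftFun α b :=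
  show b.1 ≤ min (b.1 + 1) α from le_min (le_add_right le_rfl) b.2

theorem one_le_shiftFun (ho1 : (0:Ordinal)+1 ≤ α) (b : Stage α) :
    (⟨(0:Ordinal)+1, ho1⟩ : Stage α) ≤ shiftFun α b :=
  show (0:Ordinal)+1 ≤ min (b.1 + 1) α from
    le_min (add_le_add zero_le le_rfl) ho1

noncomputable def toId (P : (Stage α)ᵒᵖ ⥤ C) : shiftP P ⟶ P where
  app b := P.map (homOfLE (le_shiftFun b.unop)).op
  naturality a b f := by
    dsimp [shiftP, shiftF]
    rw [← P.map_comp, ← P.map_comp]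
    congr 1

noncomputable def toConst (P : (Stage α)ᵒᵖ ⥤ C) (ho1 : (0:Ordinal)+1 ≤ α) (A : C)
    (e : P.obj (op ⟨(0:Ordinal)+1, ho1⟩) = A) :
    shiftP P ⟶ (Functor.const ((Stage α)ᵒᵖ)).obj A where
  app b := P.map (homOfLE (one_le_shiftFun ho1 b.unop)).op ≫ eqToHom e
  naturality a b f := by
    dsimp [shiftP, shiftF]
    simp only [Category.comp_id, ← Category.assoc, ← P.map_comp]
    congr 1
    exact (P.map_comp _ _).symm

theorem map_stage_congr (P : (Stage α)ᵒᵖ ⥤ C) {x y l : Stage α} (e : x = y)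
    (hx : l ≤ x) (hy : l ≤ y) :
    P.map (homOfLE hx).op = eqToHom (by rw [e]) ≫ P.map (homOfLE hy).op := by
  subst e; simp

theorem transfer
    (T : Monad C) (F : C ⥤ C)
    (M : Monad ((Stage α)ᵒᵖ ⥤ C))
    (hM_obj : ∀ (X : (Stage α)ᵒᵖ ⥤ C) (γ : Ordinal.{w}) (hb : γ + 1 ≤ α),
      (M.obj X).obj (op ⟨γ + 1, hb⟩) = T.obj (X.obj (op ⟨γ + 1, hb⟩)))
    (hM_map : ∀ {X Y : (Stage α)ᵒᵖ ⥤ C} (g : X ⟶ Y) (γ : Ordinal.{w})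
      (hb : γ + 1 ≤ α),
      HEq ((M.map g).app (op ⟨γ + 1, hb⟩)) (T.map (g.app (op ⟨γ + 1, hb⟩))))
    (G : ((Stage α)ᵒᵖ ⥤ C) ⥤ ((Stage α)ᵒᵖ ⥤ C))
    (hG_obj : ∀ (X : (Stage α)ᵒᵖ ⥤ C) (γ : Ordinal.{w}) (hb : γ + 1 + 1 ≤ α),
      (G.obj X).obj (op ⟨γ + 1 + 1, hb⟩) =
        F.obj (X.obj (op ⟨γ + 1, le_trans (le_add_right le_rfl) hb⟩)))
    (hG_map : ∀ {X Y : (Stage α)ᵒᵖ ⥤ C} (g : X ⟶ Y) (γ : Ordinal.{w})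
      (hb : γ + 1 + 1 ≤ α),
      HEq ((G.map g).app (op ⟨γ + 1 + 1, hb⟩))
        (F.map (g.app (op ⟨γ + 1, le_trans (le_add_right le_rfl) hb⟩))))
    (ξ : DistLaw M G)
    (ho2 : (0:Ordinal) + 1 + 1 ≤ α)
    (P Q : (Stage α)ᵒᵖ ⥤ C) (h : Q ⟶ P) (A : C)
    (hP1 : P.obj (op ⟨(0:Ordinal)+1, le_trans (le_add_right le_rfl) ho2⟩) = A)
    (hQ1 : Q.obj (op ⟨(0:Ordinal)+1, le_trans (le_add_right le_rfl) ho2⟩) = A)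
    (hcomp : h.app (op ⟨(0:Ordinal)+1, le_trans (le_add_right le_rfl) ho2⟩) =
      eqToHom (hQ1.trans hP1.symm)) :
    HEq ((ξ.nat.app Q).app (op ⟨(0:Ordinal)+1+1, ho2⟩))
      ((ξ.nat.app P).app (op ⟨(0:Ordinal)+1+1, ho2⟩)) := by
  have nat := NatTrans.congr_app (ξ.nat.naturality h) (op (⟨(0:Ordinal)+1+1, ho2⟩ : Stage α))
  simp only [NatTrans.comp_app, Functor.comp_map] at nat
  have hMh : (M.map h).app (op ⟨(0:Ordinal)+1, le_trans (le_add_right le_rfl) ho2⟩) =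
      eqToHom (((hM_obj Q 0 _).trans (congrArg T.obj (hQ1.trans hP1.symm))).trans
        (hM_obj P 0 _).symm) := by
    have h0 := hM_map h 0 (le_trans (le_add_right le_rfl) ho2)
    rw [hcomp, eqToHom_map] at h0
    exact eq_eqToHom_of_heq _ (hM_obj Q 0 _) (hM_obj P 0 _) _ h0
  have hc1 : (G.map (M.map h)).app (op ⟨(0:Ordinal)+1+1, ho2⟩) =
      eqToHom (((hG_obj _ 0 ho2).trans (congrArg F.obj
          ((((hM_obj Q 0 _).trans (congrArg T.obj (hQ1.trans hP1.symm))).trans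
            (hM_obj P 0 _).symm)))).trans (hG_obj _ 0 ho2).symm) := by
    have h1 := hG_map (M.map h) 0 ho2
    rw [hMh, eqToHom_map] at h1
    exact eq_eqToHom_of_heq _ (hG_obj _ 0 ho2) (hG_obj _ 0 ho2) _ h1
  have hGh : (G.map h).app (op ⟨(0:Ordinal)+1+1, ho2⟩) =
      eqToHom (((hG_obj _ 0 ho2).trans (congrArg F.obj (hQ1.trans hP1.symm))).trans
        (hG_obj _ 0 ho2).symm) := by
    have h2 := hG_map h 0 ho2
    rw [hcomp, eqToHom_map] at h2
    exact eq_eqToHom_of_heq _ (hG_obj _ 0 ho2) (hG_obj _ 0 ho2) _ h2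
  have hc2 : (M.map (G.map h)).app (op ⟨(0:Ordinal)+1+1, ho2⟩) =
      eqToHom (((hM_obj _ (0+1) ho2).trans (congrArg T.obj
          ((((hG_obj _ 0 ho2).trans (congrArg F.obj (hQ1.trans hP1.symm))).trans
            (hG_obj _ 0 ho2).symm)))).trans (hM_obj _ (0+1) ho2).symm) := by
    have h3 := hM_map (G.map h) (0+1) ho2
    rw [hGh, eqToHom_map] at h3
    exact eq_eqToHom_of_heq _ (hM_obj _ (0+1) ho2) (hM_obj _ (0+1) ho2) _ h3
  rw [hc1, hc2] at nat
  refine heq_of_conj _ _ ?_ ?_ ?_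
  · exact ((hG_obj _ 0 ho2).trans (congrArg F.obj
      ((((hM_obj Q 0 _).trans (congrArg T.obj (hQ1.trans hP1.symm))).trans
        (hM_obj P 0 _).symm)))).trans (hG_obj _ 0 ho2).symm
  · exact ((hM_obj _ (0+1) ho2).trans (congrArg T.obj
      ((((hG_obj _ 0 ho2).trans (congrArg F.obj (hQ1.trans hP1.symm))).trans
        (hG_obj _ 0 ho2).symm)))).trans (hM_obj _ (0+1) ho2).symm
  · rw [← Category.assoc, nat, Category.assoc, eqToHom_trans, eqToHom_refl,
      Category.comp_id]

theorem eqToHom_comp_eq {A B D : C} (p : A = B) (m : B ⟶ D) (q : A = D) (r : B = D)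
    (hm : m = eqToHom r) : eqToHom p ≫ m = eqToHom q := by
  subst hm; simp

theorem eq_of_conj_nat {A B A' B' : C} (x : A ⟶ B) (y : A' ⟶ B') (p : A = A') (q : B' = B)
    (r : B = B') (nat : eqToHom p ≫ y = x ≫ eqToHom r) :
    x = eqToHom p ≫ y ≫ eqToHom q := by
  rw [← Category.assoc, nat, Category.assoc, eqToHom_trans, eqToHom_refl, Category.comp_id]

theorem bridge
    (T : Monad C) (F : C ⥤ C)
    (Dl : C ⥤ ((Stage α)ᵒᵖ ⥤ C))
    (hD_obj : ∀ (X : C) (b : Ordinal.{w}) (hb : b ≤ α), 1 ≤ b →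
      (Dl.obj X).obj (op ⟨b, hb⟩) = X)
    (hD_res : ∀ (X : C) (b b' : Ordinal.{w}) (hb : b ≤ α) (hb' : b' ≤ α)
      (h : b ≤ b') (_ : 1 ≤ b),
      HEq ((Dl.obj X).map (homOfLE (show (⟨b, hb⟩ : Stage α) ≤ ⟨b', hb'⟩ from h)).op)
        (𝟙 X))
    (M : Monad ((Stage α)ᵒᵖ ⥤ C))
    (hM_obj : ∀ (X : (Stage α)ᵒᵖ ⥤ C) (γ : Ordinal.{w}) (hb : γ + 1 ≤ α),
      (M.obj X).obj (op ⟨γ + 1, hb⟩) = T.obj (X.obj (op ⟨γ + 1, hb⟩)))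
    (hM_res : ∀ (X : (Stage α)ᵒᵖ ⥤ C) (γ γ' : Ordinal.{w}) (hb : γ + 1 ≤ α)
      (hb' : γ' + 1 ≤ α) (h : γ + 1 ≤ γ' + 1),
      HEq ((M.obj X).map
          (homOfLE (show (⟨γ + 1, hb⟩ : Stage α) ≤ ⟨γ' + 1, hb'⟩ from h)).op)
        (T.map (X.map
          (homOfLE (show (⟨γ + 1, hb⟩ : Stage α) ≤ ⟨γ' + 1, hb'⟩ from h)).op)))
    (hM_map : ∀ {X Y : (Stage α)ᵒᵖ ⥤ C} (g : X ⟶ Y) (γ : Ordinal.{w})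
      (hb : γ + 1 ≤ α),
      HEq ((M.map g).app (op ⟨γ + 1, hb⟩)) (T.map (g.app (op ⟨γ + 1, hb⟩))))
    (G : ((Stage α)ᵒᵖ ⥤ C) ⥤ ((Stage α)ᵒᵖ ⥤ C))
    (hG_obj : ∀ (X : (Stage α)ᵒᵖ ⥤ C) (γ : Ordinal.{w}) (hb : γ + 1 + 1 ≤ α),
      (G.obj X).obj (op ⟨γ + 1 + 1, hb⟩) =
        F.obj (X.obj (op ⟨γ + 1, le_trans (le_add_right le_rfl) hb⟩)))
    (hG_map : ∀ {X Y : (Stage α)ᵒᵖ ⥤ C} (g : X ⟶ Y) (γ : Ordinal.{w})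
      (hb : γ + 1 + 1 ≤ α),
      HEq ((G.map g).app (op ⟨γ + 1 + 1, hb⟩))
        (F.map (g.app (op ⟨γ + 1, le_trans (le_add_right le_rfl) hb⟩))))
    (ξ : DistLaw M G)
    (ho2 : (0:Ordinal) + 1 + 1 ≤ α) (X : C) :
    HEq ((ξ.nat.app (M.obj (Dl.obj X))).app (op ⟨(0:Ordinal)+1+1, ho2⟩))
      ((ξ.nat.app (Dl.obj (T.obj X))).app (op ⟨(0:Ordinal)+1+1, ho2⟩)) := by
  have ho1 : (0:Ordinal)+1 ≤ α := le_trans (le_add_right le_rfl) ho2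
  have one_le1 : (1:Ordinal) ≤ 0+1 := by rw [zero_add]
  have one_le2 : (1:Ordinal) ≤ 0+1+1 := le_trans one_le1 (le_add_right le_rfl)
  have le2 : ((⟨(0:Ordinal)+1, ho1⟩ : Stage α) ≤ ⟨(0:Ordinal)+1+1, ho2⟩) :=
    show (0:Ordinal)+1 ≤ 0+1+1 from le_add_right le_rfl
  have eD1 : (Dl.obj X).obj (op ⟨(0:Ordinal)+1, ho1⟩) = X := hD_obj X _ ho1 one_le1
  have eD2 : (Dl.obj X).obj (op ⟨(0:Ordinal)+1+1, ho2⟩) = X := hD_obj X _ ho2 one_le2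
  have eP1 : (M.obj (Dl.obj X)).obj (op ⟨(0:Ordinal)+1, ho1⟩) = T.obj X :=
    (hM_obj _ 0 ho1).trans (congrArg T.obj eD1)
  have eP2 : (M.obj (Dl.obj X)).obj (op ⟨(0:Ordinal)+1+1, ho2⟩) = T.obj X :=
    (hM_obj _ (0+1) ho2).trans (congrArg T.obj eD2)
  have eR1 : (Dl.obj (T.obj X)).obj (op ⟨(0:Ordinal)+1, ho1⟩) = T.obj X :=
    hD_obj _ _ ho1 one_le1
  have estage : shiftFun α (⟨(0:Ordinal)+1, ho1⟩ : Stage α) =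
      (⟨(0:Ordinal)+1+1, ho2⟩ : Stage α) := Subtype.ext (min_eq_left ho2)
  -- the inner restriction of `M (Dl X)` from stage 2 to stage 1 is an eqToHom
  have resP : (M.obj (Dl.obj X)).map (homOfLE le2).op = eqToHom (eP2.trans eP1.symm) := by
    have h0 := hM_res (Dl.obj X) 0 (0+1) ho1 ho2 le2
    have hD' : (Dl.obj X).map (homOfLE le2).op = eqToHom (eD2.trans eD1.symm) :=
      eq_eqToHom_of_heq_id _ eD2 eD1 (hD_res X (0+1) (0+1+1) ho1 ho2 le2 one_le1)
    rw [hD'] at h0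
    exact eq_eqToHom_of_heq _ (hM_obj _ (0+1) ho2) (hM_obj _ 0 ho1) _ (h0.trans (heq_of_eq (eqToHom_map _ _)))
  -- stage-1 value of the shifted presheaf
  have eSh : (shiftP (M.obj (Dl.obj X))).obj (op ⟨(0:Ordinal)+1, ho1⟩) =
      (M.obj (Dl.obj X)).obj (op ⟨(0:Ordinal)+1+1, ho2⟩) :=
    congrArg (fun s => (M.obj (Dl.obj X)).obj (op s)) estage
  have compToIdP : (M.obj (Dl.obj X)).map
        (homOfLE (le_shiftFun (⟨(0:Ordinal)+1, ho1⟩ : Stage α))).op =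
      eqToHom (eSh.trans (eP2.trans eP1.symm)) := by
    rw [map_stage_congr (M.obj (Dl.obj X)) estage (le_shiftFun _) le2]
    exact eqToHom_comp_eq _ _ _ _ resP
  have t1 : HEq ((ξ.nat.app (shiftP (M.obj (Dl.obj X)))).app (op ⟨(0:Ordinal)+1+1, ho2⟩))
      ((ξ.nat.app (M.obj (Dl.obj X))).app (op ⟨(0:Ordinal)+1+1, ho2⟩)) := by
    refine transfer T F M hM_obj @hM_map G hG_obj @hG_map ξ ho2
      (M.obj (Dl.obj X)) _ (toId _) (T.obj X) eP1 (eSh.trans eP2) ?_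
    exact compToIdP
  have t2 : HEq ((ξ.nat.app (shiftP (M.obj (Dl.obj X)))).app (op ⟨(0:Ordinal)+1+1, ho2⟩))
      ((ξ.nat.app ((Functor.const ((Stage α)ᵒᵖ)).obj (T.obj X))).app
        (op ⟨(0:Ordinal)+1+1, ho2⟩)) := by
    refine transfer T F M hM_obj @hM_map G hG_obj @hG_map ξ ho2
      ((Functor.const ((Stage α)ᵒᵖ)).obj (T.obj X)) _
      (toConst (M.obj (Dl.obj X)) ho1 (T.obj X) eP1) (T.obj X) rfl (eSh.trans eP2) ?_
    show (M.obj (Dl.obj X)).map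
        (homOfLE (one_le_shiftFun ho1 (⟨(0:Ordinal)+1, ho1⟩ : Stage α))).op ≫
        eqToHom eP1 = _
    have : (M.obj (Dl.obj X)).map
        (homOfLE (one_le_shiftFun ho1 (⟨(0:Ordinal)+1, ho1⟩ : Stage α))).op =
        eqToHom (eSh.trans (eP2.trans eP1.symm)) := compToIdP
    simp only [this]
    exact eqToHom_trans _ _
  -- the same two steps for `Dl (T X)`
  have eRsh : (shiftP (Dl.obj (T.obj X))).obj (op ⟨(0:Ordinal)+1, ho1⟩) = T.obj X :=
    hD_obj (T.obj X) _ (min_le_right _ _)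
      (le_min one_le2 (le_trans one_le1 ho1))
  have resR : (Dl.obj (T.obj X)).map
        (homOfLE (le_shiftFun (⟨(0:Ordinal)+1, ho1⟩ : Stage α))).op =
      eqToHom (eRsh.trans eR1.symm) :=
    eq_eqToHom_of_heq_id _ eRsh eR1
      (hD_res (T.obj X) (0+1) (min ((0:Ordinal)+1+1) α) ho1 (min_le_right _ _)
        (le_min (le_add_right le_rfl) ho1) one_le1)
  have t3 : HEq ((ξ.nat.app (shiftP (Dl.obj (T.obj X)))).app (op ⟨(0:Ordinal)+1+1, ho2⟩))
      ((ξ.nat.app (Dl.obj (T.obj X))).app (op ⟨(0:Ordinal)+1+1, ho2⟩)) := by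
    refine transfer T F M hM_obj @hM_map G hG_obj @hG_map ξ ho2
      (Dl.obj (T.obj X)) _ (toId _) (T.obj X) eR1 eRsh ?_
    exact resR
  have t4 : HEq ((ξ.nat.app (shiftP (Dl.obj (T.obj X)))).app (op ⟨(0:Ordinal)+1+1, ho2⟩))
      ((ξ.nat.app ((Functor.const ((Stage α)ᵒᵖ)).obj (T.obj X))).app
        (op ⟨(0:Ordinal)+1+1, ho2⟩)) := by
    refine transfer T F M hM_obj @hM_map G hG_obj @hG_map ξ ho2
      ((Functor.const ((Stage α)ᵒᵖ)).obj (T.obj X)) _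
      (toConst (Dl.obj (T.obj X)) ho1 (T.obj X) eR1) (T.obj X) rfl eRsh ?_
    show (Dl.obj (T.obj X)).map
        (homOfLE (one_le_shiftFun ho1 (⟨(0:Ordinal)+1, ho1⟩ : Stage α))).op ≫
        eqToHom eR1 = _
    have : (Dl.obj (T.obj X)).map
        (homOfLE (one_le_shiftFun ho1 (⟨(0:Ordinal)+1, ho1⟩ : Stage α))).op =
        eqToHom (eRsh.trans eR1.symm) := resR
    simp only [this]
    exact eqToHom_trans _ _
  exact (t1.symm.trans t2).trans (t4.symm.trans t3)

/-- independence of the stage: the component of `ξ` at `Δ X` at stage `β+2`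
agrees with the one at stage `2`. -/
theorem indep
    (T : Monad C) (F : C ⥤ C)
    (Dl : C ⥤ ((Stage α)ᵒᵖ ⥤ C))
    (hD_obj : ∀ (X : C) (b : Ordinal.{w}) (hb : b ≤ α), 1 ≤ b →
      (Dl.obj X).obj (op ⟨b, hb⟩) = X)
    (hD_res : ∀ (X : C) (b b' : Ordinal.{w}) (hb : b ≤ α) (hb' : b' ≤ α)
      (h : b ≤ b') (_ : 1 ≤ b),
      HEq ((Dl.obj X).map (homOfLE (show (⟨b, hb⟩ : Stage α) ≤ ⟨b', hb'⟩ from h)).op)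
        (𝟙 X))
    (M : Monad ((Stage α)ᵒᵖ ⥤ C))
    (hM_obj : ∀ (X : (Stage α)ᵒᵖ ⥤ C) (γ : Ordinal.{w}) (hb : γ + 1 ≤ α),
      (M.obj X).obj (op ⟨γ + 1, hb⟩) = T.obj (X.obj (op ⟨γ + 1, hb⟩)))
    (hM_res : ∀ (X : (Stage α)ᵒᵖ ⥤ C) (γ γ' : Ordinal.{w}) (hb : γ + 1 ≤ α)
      (hb' : γ' + 1 ≤ α) (h : γ + 1 ≤ γ' + 1),
      HEq ((M.obj X).map
          (homOfLE (show (⟨γ + 1, hb⟩ : Stage α) ≤ ⟨γ' + 1, hb'⟩ from h)).op)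
        (T.map (X.map
          (homOfLE (show (⟨γ + 1, hb⟩ : Stage α) ≤ ⟨γ' + 1, hb'⟩ from h)).op)))
    (G : ((Stage α)ᵒᵖ ⥤ C) ⥤ ((Stage α)ᵒᵖ ⥤ C))
    (hG_obj : ∀ (X : (Stage α)ᵒᵖ ⥤ C) (γ : Ordinal.{w}) (hb : γ + 1 + 1 ≤ α),
      (G.obj X).obj (op ⟨γ + 1 + 1, hb⟩) =
        F.obj (X.obj (op ⟨γ + 1, le_trans (le_add_right le_rfl) hb⟩)))
    (hG_res : ∀ (X : (Stage α)ᵒᵖ ⥤ C) (γ γ' : Ordinal.{w}) (hb : γ + 1 + 1 ≤ α)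
      (hb' : γ' + 1 + 1 ≤ α) (h : γ + 1 + 1 ≤ γ' + 1 + 1),
      HEq ((G.obj X).map
          (homOfLE (show (⟨γ + 1 + 1, hb⟩ : Stage α) ≤ ⟨γ' + 1 + 1, hb'⟩ from h)).op)
        (F.map (X.map (homOfLE (show (⟨γ + 1, le_trans (le_add_right le_rfl) hb⟩ :
            Stage α) ≤ ⟨γ' + 1, le_trans (le_add_right le_rfl) hb'⟩ from
              by simpa using h)).op)))
    (ξ : DistLaw M G)
    (ho2 : (0:Ordinal) + 1 + 1 ≤ α) (X : C) (β : Ordinal.{w}) (hβ : β + 1 + 1 ≤ α) :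
    HEq ((ξ.nat.app (Dl.obj X)).app (op ⟨β+1+1, hβ⟩))
      ((ξ.nat.app (Dl.obj X)).app (op ⟨(0:Ordinal)+1+1, ho2⟩)) := by
  have ho1 : (0:Ordinal)+1 ≤ α := le_trans (le_add_right le_rfl) ho2
  have hβ1 : β+1 ≤ α := le_trans (le_add_right le_rfl) hβ
  have one_le1 : (1:Ordinal) ≤ 0+1 := by rw [zero_add]
  have one_leβ : (1:Ordinal) ≤ β+1 := le_trans one_le1 (add_le_add zero_le le_rfl)
  have le1 : (0:Ordinal)+1 ≤ β+1 := add_le_add zero_le le_rfl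
  have le2 : (0:Ordinal)+1+1 ≤ β+1+1 := add_le_add le1 le_rfl
  have eD1 : (Dl.obj X).obj (op ⟨(0:Ordinal)+1, ho1⟩) = X := hD_obj X _ ho1 one_le1
  have eDβ : (Dl.obj X).obj (op ⟨β+1, hβ1⟩) = X := hD_obj X _ hβ1 one_leβ
  -- naturality of the presheaf morphism `ξ.nat.app (Dl X)` along the restriction
  have nat := (ξ.nat.app (Dl.obj X)).naturality
    (homOfLE (show (⟨(0:Ordinal)+1+1, ho2⟩ : Stage α) ≤ ⟨β+1+1, hβ⟩ from le2)).op
  -- left coefficient is an eqToHom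
  have hres : (Dl.obj X).map
      (homOfLE (show (⟨(0:Ordinal)+1, ho1⟩ : Stage α) ≤ ⟨β+1, hβ1⟩ from le1)).op =
      eqToHom (eDβ.trans eD1.symm) :=
    eq_eqToHom_of_heq_id _ eDβ eD1 (hD_res X (0+1) (β+1) ho1 hβ1 le1 one_le1)
  have hL : ((M.toFunctor ⋙ G).obj (Dl.obj X)).map
      (homOfLE (show (⟨(0:Ordinal)+1+1, ho2⟩ : Stage α) ≤ ⟨β+1+1, hβ⟩ from le2)).op =
      eqToHom ((((hG_obj _ β hβ).trans (congrArg F.obj ((hM_obj _ β hβ1).trans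
          (congrArg T.obj eDβ)))).trans
        ((congrArg F.obj ((hM_obj _ 0 ho1).trans (congrArg T.obj eD1)))).symm).trans
          (hG_obj _ 0 ho2).symm) := by
    have h0 := hG_res (M.obj (Dl.obj X)) 0 β ho2 hβ le2
    have h1 : (M.obj (Dl.obj X)).map
        (homOfLE (show (⟨(0:Ordinal)+1, le_trans (le_add_right le_rfl) ho2⟩ :
          Stage α) ≤ ⟨β+1, le_trans (le_add_right le_rfl) hβ⟩ from le1)).op =
        eqToHom (((hM_obj _ β hβ1).trans (congrArg T.obj eDβ)).trans
          (((hM_obj _ 0 ho1).trans (congrArg T.obj eD1))).symm) := by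
      have h2 := hM_res (Dl.obj X) 0 β ho1 hβ1 le1
      have h3 : (Dl.obj X).map
          (homOfLE (show (⟨(0:Ordinal)+1, ho1⟩ : Stage α) ≤ ⟨β+1, hβ1⟩ from le1)).op =
          eqToHom (eDβ.trans eD1.symm) := hres
      rw [h3] at h2
      exact eq_eqToHom_of_heq _ (hM_obj _ β hβ1) (hM_obj _ 0 ho1) _ (h2.trans (heq_of_eq (eqToHom_map _ _)))
    rw [h1] at h0
    exact eq_eqToHom_of_heq _ (hG_obj _ β hβ) (hG_obj _ 0 ho2) _ (h0.trans (heq_of_eq (eqToHom_map _ _)))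
  -- right coefficient is an eqToHom
  have hR : ((G ⋙ M.toFunctor).obj (Dl.obj X)).map
      (homOfLE (show (⟨(0:Ordinal)+1+1, ho2⟩ : Stage α) ≤ ⟨β+1+1, hβ⟩ from le2)).op =
      eqToHom ((((hM_obj _ (β+1) hβ).trans (congrArg T.obj ((hG_obj _ β hβ).trans
          (congrArg F.obj eDβ)))).trans
        ((congrArg T.obj ((hG_obj _ 0 ho2).trans (congrArg F.obj eD1)))).symm).trans
          (hM_obj _ (0+1) ho2).symm) := by
    have h0 := hM_res (G.obj (Dl.obj X)) (0+1) (β+1) ho2 hβ le2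
    have h1 : (G.obj (Dl.obj X)).map
        (homOfLE (show (⟨(0:Ordinal)+1+1, ho2⟩ : Stage α) ≤ ⟨β+1+1, hβ⟩ from le2)).op =
        eqToHom (((hG_obj _ β hβ).trans (congrArg F.obj eDβ)).trans
          (((hG_obj _ 0 ho2).trans (congrArg F.obj eD1))).symm) := by
      have h2 := hG_res (Dl.obj X) 0 β ho2 hβ le2
      have h3 : (Dl.obj X).map
          (homOfLE (show (⟨(0:Ordinal)+1, le_trans (le_add_right le_rfl) ho2⟩ :
            Stage α) ≤ ⟨β+1, le_trans (le_add_right le_rfl) hβ⟩ from le1)).op =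
          eqToHom (eDβ.trans eD1.symm) :=
        eq_eqToHom_of_heq_id _ eDβ eD1 (hD_res X (0+1) (β+1) _ _ le1 one_le1)
      rw [h3] at h2
      exact eq_eqToHom_of_heq _ (hG_obj _ β hβ) (hG_obj _ 0 ho2) _ (h2.trans (heq_of_eq (eqToHom_map _ _)))
    rw [h1] at h0
    exact eq_eqToHom_of_heq _ (hM_obj _ (β+1) hβ) (hM_obj _ (0+1) ho2) _ (h0.trans (heq_of_eq (eqToHom_map _ _)))
  rw [hL, hR] at nat
  refine heq_of_conj _ _ ?_ ?_ ?_
  · exact (((hG_obj _ β hβ).trans (congrArg F.obj ((hM_obj _ β hβ1).trans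
      (congrArg T.obj eDβ)))).trans
        ((congrArg F.obj ((hM_obj _ 0 ho1).trans (congrArg T.obj eD1)))).symm).trans
          (hG_obj _ 0 ho2).symm
  · exact (((hM_obj _ (β+1) hβ).trans (congrArg T.obj ((hG_obj _ β hβ).trans
      (congrArg F.obj eDβ)))).trans
        ((congrArg T.obj ((hG_obj _ 0 ho2).trans (congrArg F.obj eD1)))).symm).trans
          (hM_obj _ (0+1) ho2).symm
  · exact eq_of_conj_nat _ _ _ _ _ nat


theorem fmap_heq {D : Type*} [Category D] (K : C ⥤ D) {A B A' B' : C}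
    (eA : A = A') (eB : B = B') {f : A ⟶ B} {g : A' ⟶ B'} (h : HEq f g) :
    HEq (K.map f) (K.map g) := by
  subst eA; subst eB; rw [heq_iff_eq] at h ⊢; exact congrArg K.map h

theorem app_heq {D : Type*} [Category D] {K L : C ⥤ D} (κ : K ⟶ L) {A B : C}
    (e : A = B) : HEq (κ.app A) (κ.app B) := by
  subst e; rfl

end IndAux

open IndAux

/-- Let `α > 1`, `(T,μ,η)` a monad and `F` an endofunctor on `C`.  Let `Δ` be the
constant sheaf functor (value `X` at every stage `≥ 1`, with identity restrictions),
`T^` the pointwise extension of the monad `T` (acting as `T` — on values, on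
restrictions, on morphisms, and on the unit and multiplication — at every successor
stage), and `F^ ∘ ▶` the guarded pointwise extension of `F` (acting as
`(F^ ▶ X)_{β+2} = F (X_{β+1})` at double-successor stages).  Then for any
distributive law `ξ` of `T^` over `F^ ∘ ▶`, the components `ξ_{ΔX, β+2}` are
independent of the choice of `β` and constitute a distributive law `λ : FT ⟶ TF` of
`(T,μ,η)` over `F`. -/
theorem induced_distributive_law
    {C : Type u} [Category.{v} C] (α : Ordinal.{w}) (hα : 1 < α)
    (T : Monad C) (F : C ⥤ C)
    -- the constant sheaf functor `Δ : C ⥤ Sh_C(α)`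
    (Dl : C ⥤ ((Stage α)ᵒᵖ ⥤ C))
    (hD_obj : ∀ (X : C) (b : Ordinal.{w}) (hb : b ≤ α), 1 ≤ b →
      (Dl.obj X).obj (op ⟨b, hb⟩) = X)
    (hD_res : ∀ (X : C) (b b' : Ordinal.{w}) (hb : b ≤ α) (hb' : b' ≤ α)
      (h : b ≤ b') (_ : 1 ≤ b),
      HEq ((Dl.obj X).map (homOfLE (show (⟨b, hb⟩ : Stage α) ≤ ⟨b', hb'⟩ from h)).op)
        (𝟙 X))
    (hD_map : ∀ {X Y : C} (f : X ⟶ Y) (b : Ordinal.{w}) (hb : b ≤ α), 1 ≤ b →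
      HEq ((Dl.map f).app (op ⟨b, hb⟩)) f)
    -- the pointwise extension `T^` of the monad `T`
    (M : Monad ((Stage α)ᵒᵖ ⥤ C))
    (hM_obj : ∀ (X : (Stage α)ᵒᵖ ⥤ C) (γ : Ordinal.{w}) (hb : γ + 1 ≤ α),
      (M.obj X).obj (op ⟨γ + 1, hb⟩) = T.obj (X.obj (op ⟨γ + 1, hb⟩)))
    (hM_res : ∀ (X : (Stage α)ᵒᵖ ⥤ C) (γ γ' : Ordinal.{w}) (hb : γ + 1 ≤ α)
      (hb' : γ' + 1 ≤ α) (h : γ + 1 ≤ γ' + 1),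
      HEq ((M.obj X).map
          (homOfLE (show (⟨γ + 1, hb⟩ : Stage α) ≤ ⟨γ' + 1, hb'⟩ from h)).op)
        (T.map (X.map
          (homOfLE (show (⟨γ + 1, hb⟩ : Stage α) ≤ ⟨γ' + 1, hb'⟩ from h)).op)))
    (hM_map : ∀ {X Y : (Stage α)ᵒᵖ ⥤ C} (g : X ⟶ Y) (γ : Ordinal.{w})
      (hb : γ + 1 ≤ α),
      HEq ((M.map g).app (op ⟨γ + 1, hb⟩)) (T.map (g.app (op ⟨γ + 1, hb⟩))))
    (hM_eta : ∀ (X : (Stage α)ᵒᵖ ⥤ C) (γ : Ordinal.{w}) (hb : γ + 1 ≤ α),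
      HEq ((M.η.app X).app (op ⟨γ + 1, hb⟩)) (T.η.app (X.obj (op ⟨γ + 1, hb⟩))))
    (hM_mu : ∀ (X : (Stage α)ᵒᵖ ⥤ C) (γ : Ordinal.{w}) (hb : γ + 1 ≤ α),
      HEq ((M.μ.app X).app (op ⟨γ + 1, hb⟩)) (T.μ.app (X.obj (op ⟨γ + 1, hb⟩))))
    -- the guarded pointwise extension `F^ ∘ ▶` of `F`
    (G : ((Stage α)ᵒᵖ ⥤ C) ⥤ ((Stage α)ᵒᵖ ⥤ C))
    (hG_obj : ∀ (X : (Stage α)ᵒᵖ ⥤ C) (γ : Ordinal.{w}) (hb : γ + 1 + 1 ≤ α),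
      (G.obj X).obj (op ⟨γ + 1 + 1, hb⟩) =
        F.obj (X.obj (op ⟨γ + 1, le_trans (le_add_right le_rfl) hb⟩)))
    (hG_res : ∀ (X : (Stage α)ᵒᵖ ⥤ C) (γ γ' : Ordinal.{w}) (hb : γ + 1 + 1 ≤ α)
      (hb' : γ' + 1 + 1 ≤ α) (h : γ + 1 + 1 ≤ γ' + 1 + 1),
      HEq ((G.obj X).map
          (homOfLE (show (⟨γ + 1 + 1, hb⟩ : Stage α) ≤ ⟨γ' + 1 + 1, hb'⟩ from h)).op)
        (F.map (X.map (homOfLE (show (⟨γ + 1, le_trans (le_add_right le_rfl) hb⟩ :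
            Stage α) ≤ ⟨γ' + 1, le_trans (le_add_right le_rfl) hb'⟩ from
              by simpa using h)).op)))
    (hG_map : ∀ {X Y : (Stage α)ᵒᵖ ⥤ C} (g : X ⟶ Y) (γ : Ordinal.{w})
      (hb : γ + 1 + 1 ≤ α),
      HEq ((G.map g).app (op ⟨γ + 1 + 1, hb⟩))
        (F.map (g.app (op ⟨γ + 1, le_trans (le_add_right le_rfl) hb⟩))))
    -- a distributive law of `T^` over `F^ ∘ ▶`
    (ξ : DistLaw M G) :
    ∃ l : DistLaw T F,
      ∀ (X : C) (β : Ordinal.{w}) (h : β + 1 + 1 ≤ α),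
        HEq ((ξ.nat.app (Dl.obj X)).app (op ⟨β + 1 + 1, h⟩)) (l.nat.app X) := by
  
  have ho2 : (0:Ordinal) + 1 + 1 ≤ α := by
    rw [zero_add]; exact Order.add_one_le_iff.mpr hα
  have ho1 : (0:Ordinal) + 1 ≤ α := le_trans (le_add_right le_rfl) ho2
  have one_le1 : (1:Ordinal) ≤ 0 + 1 := by rw [zero_add]
  have eD1 : ∀ X : C, (Dl.obj X).obj (op ⟨(0:Ordinal)+1, ho1⟩) = X :=
    fun X => hD_obj X _ ho1 one_le1
  have eM1 : ∀ X : C, (M.obj (Dl.obj X)).obj (op ⟨(0:Ordinal)+1, ho1⟩) = T.obj X :=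
    fun X => (hM_obj _ 0 ho1).trans (congrArg T.obj (eD1 X))
  have eGM : ∀ X : C,
      (G.obj (M.obj (Dl.obj X))).obj (op ⟨(0:Ordinal)+1+1, ho2⟩) = F.obj (T.obj X) :=
    fun X => (hG_obj _ 0 ho2).trans (congrArg F.obj (eM1 X))
  have eGD : ∀ X : C, (G.obj (Dl.obj X)).obj (op ⟨(0:Ordinal)+1+1, ho2⟩) = F.obj X :=
    fun X => (hG_obj _ 0 ho2).trans (congrArg F.obj (eD1 X))
  have eMG : ∀ X : C,
      (M.obj (G.obj (Dl.obj X))).obj (op ⟨(0:Ordinal)+1+1, ho2⟩) = T.obj (F.obj X) :=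
    fun X => (hM_obj _ (0+1) ho2).trans (congrArg T.obj (eGD X))
  refine ⟨⟨⟨fun X => eqToHom (eGM X).symm ≫
      (ξ.nat.app (Dl.obj X)).app (op ⟨(0:Ordinal)+1+1, ho2⟩) ≫ eqToHom (eMG X), ?_⟩,
      ?_, ?_⟩, ?_⟩
  · -- naturality
    intro X Y f
    have nat := NatTrans.congr_app (ξ.nat.naturality (Dl.map f))
      (op (⟨(0:Ordinal)+1+1, ho2⟩ : Stage α))
    simp only [NatTrans.comp_app, Functor.comp_map] at nat
    have c1 : (G.map (M.map (Dl.map f))).app (op ⟨(0:Ordinal)+1+1, ho2⟩) =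
        eqToHom (eGM X) ≫ F.map (T.map f) ≫ eqToHom (eGM Y).symm := by
      refine eq_conj _ _ (eGM X) (eGM Y) ?_
      refine (hG_map (M.map (Dl.map f)) 0 ho2).trans ?_
      refine fmap_heq F (eM1 X) (eM1 Y) ?_
      refine (hM_map (Dl.map f) 0 ho1).trans ?_
      refine fmap_heq T.toFunctor (eD1 X) (eD1 Y) ?_
      exact hD_map f _ ho1 one_le1
    have c2 : (M.map (G.map (Dl.map f))).app (op ⟨(0:Ordinal)+1+1, ho2⟩) =
        eqToHom (eMG X) ≫ T.map (F.map f) ≫ eqToHom (eMG Y).symm := by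
      refine eq_conj _ _ (eMG X) (eMG Y) ?_
      refine (hM_map (G.map (Dl.map f)) (0+1) ho2).trans ?_
      refine fmap_heq T.toFunctor (eGD X) (eGD Y) ?_
      refine (hG_map (Dl.map f) 0 ho2).trans ?_
      refine fmap_heq F (eD1 X) (eD1 Y) ?_
      exact hD_map f _ ho1 one_le1
    rw [c1, c2] at nat
    simpa using congrArg (fun z => eqToHom (eGM X).symm ≫ z ≫ eqToHom (eMG Y)) nat
  · -- mu_compat
    intro X
    have raw := NatTrans.congr_app (ξ.mu_compat (Dl.obj X))
      (op (⟨(0:Ordinal)+1+1, ho2⟩ : Stage α))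
    simp only [NatTrans.comp_app] at raw
    have eMM1 : (M.obj (M.obj (Dl.obj X))).obj (op ⟨(0:Ordinal)+1, ho1⟩) =
        T.obj (T.obj X) := (hM_obj _ 0 ho1).trans (congrArg T.obj (eM1 X))
    have eGMM : (G.obj (M.obj (M.obj (Dl.obj X)))).obj (op ⟨(0:Ordinal)+1+1, ho2⟩) =
        F.obj (T.obj (T.obj X)) := (hG_obj _ 0 ho2).trans (congrArg F.obj eMM1)
    have eMGM : (M.obj (G.obj (M.obj (Dl.obj X)))).obj (op ⟨(0:Ordinal)+1+1, ho2⟩) =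
        T.obj (F.obj (T.obj X)) :=
      (hM_obj _ (0+1) ho2).trans (congrArg T.obj
        ((hG_obj _ 0 ho2).trans (congrArg F.obj (eM1 X))))
    have a' : (G.map (M.μ.app (Dl.obj X))).app (op ⟨(0:Ordinal)+1+1, ho2⟩) =
        eqToHom eGMM ≫ F.map (T.μ.app X) ≫ eqToHom (eGM X).symm :=
      eq_conj _ _ eGMM (eGM X)
        ((hG_map (M.μ.app (Dl.obj X)) 0 ho2).trans
          (fmap_heq F eMM1 (eM1 X)
            ((hM_mu (Dl.obj X) 0 ho1).trans (app_heq T.μ (eD1 X)))))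
    have dH := bridge T F Dl hD_obj hD_res M hM_obj hM_res @hM_map G hG_obj @hG_map
      ξ ho2 X
    have d' : (ξ.nat.app (M.obj (Dl.obj X))).app (op ⟨(0:Ordinal)+1+1, ho2⟩) =
        eqToHom (eGMM.trans (eGM (T.obj X)).symm) ≫
          (ξ.nat.app (Dl.obj (T.obj X))).app (op ⟨(0:Ordinal)+1+1, ho2⟩) ≫
          eqToHom (eMGM.trans (eMG (T.obj X)).symm).symm :=
      eq_conj _ _ (eGMM.trans (eGM (T.obj X)).symm)
        (eMGM.trans (eMG (T.obj X)).symm) dH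
    have m' : (M.map (ξ.nat.app (Dl.obj X))).app (op ⟨(0:Ordinal)+1+1, ho2⟩) =
        eqToHom (hM_obj _ (0+1) ho2) ≫
          T.map ((ξ.nat.app (Dl.obj X)).app (op ⟨(0:Ordinal)+1+1, ho2⟩)) ≫
          eqToHom (hM_obj _ (0+1) ho2).symm :=
      eq_conj _ _ (hM_obj _ (0+1) ho2) (hM_obj _ (0+1) ho2)
        (hM_map (ξ.nat.app (Dl.obj X)) (0+1) ho2)
    have e5 : (M.obj (M.obj (G.obj (Dl.obj X)))).obj (op ⟨(0:Ordinal)+1+1, ho2⟩) =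
        T.obj (T.obj (F.obj X)) := (hM_obj _ (0+1) ho2).trans (congrArg T.obj (eMG X))
    have u' : (M.μ.app (G.obj (Dl.obj X))).app (op ⟨(0:Ordinal)+1+1, ho2⟩) =
        eqToHom e5 ≫ T.μ.app (F.obj X) ≫ eqToHom (eMG X).symm :=
      eq_conj _ _ e5 (eMG X)
        ((hM_mu (G.obj (Dl.obj X)) (0+1) ho2).trans (app_heq T.μ (eGD X)))
    rw [a', d', m', u'] at raw
    simpa [eqToHom_map] using
      congrArg (fun z => eqToHom eGMM.symm ≫ z ≫ eqToHom (eMG X)) raw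
  · -- eta_compat
    intro X
    have raw := NatTrans.congr_app (ξ.eta_compat (Dl.obj X))
      (op (⟨(0:Ordinal)+1+1, ho2⟩ : Stage α))
    simp only [NatTrans.comp_app] at raw
    have a' : (G.map (M.η.app (Dl.obj X))).app (op ⟨(0:Ordinal)+1+1, ho2⟩) =
        eqToHom (eGD X) ≫ F.map (T.η.app X) ≫ eqToHom (eGM X).symm :=
      eq_conj _ _ (eGD X) (eGM X)
        ((hG_map (M.η.app (Dl.obj X)) 0 ho2).trans
          (fmap_heq F (eD1 X) (eM1 X)
            ((hM_eta (Dl.obj X) 0 ho1).trans (app_heq T.η (eD1 X)))))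
    have u' : (M.η.app (G.obj (Dl.obj X))).app (op ⟨(0:Ordinal)+1+1, ho2⟩) =
        eqToHom (eGD X) ≫ T.η.app (F.obj X) ≫ eqToHom (eMG X).symm :=
      eq_conj _ _ (eGD X) (eMG X)
        ((hM_eta (G.obj (Dl.obj X)) (0+1) ho2).trans (app_heq T.η (eGD X)))
    rw [a', u'] at raw
    simpa using congrArg (fun z => eqToHom (eGD X).symm ≫ z ≫ eqToHom (eMG X)) raw
  · -- the components at all double-successor stages agree with `lam`
    intro X β h
    refine (indep T F Dl hD_obj hD_res M hM_obj hM_res G hG_obj hG_res ξ ho2 X β h).trans ?_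
    refine heq_of_conj _ _ (eGM X) (eMG X) ?_
    simp
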